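/- Pointwise Prékopa–Leindler hypothesis for the discrete Hopf–Lax semigroup: with a = α/β, b = (β−α)/β, θ = β(β−α)/(αnh), u(x) = e^{βQ_n f(x)}, v(y) = e^{−θ|y|²/2}, w(z) = e^{αf(βz/α)}, one has u(x)^a v(y)^b ≤ w(ax + by) for all x, y ∈ ℝ^N. -/

import Mathlib

open scoped BigOperators

noncomputable section

/-- Semi-Lagrangian discrete semigroup for `L(q) = |q|²/2`. -/
def Q {N : ℕ} (h : ℝ) (f : EuclideanSpace ℝ (Fin N) → ℝ) (n : ℕ)
    (x : EuclideanSpace ℝ (Fin N)) : ℝ :=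
  ⨅ q : Fin n → EuclideanSpace ℝ (Fin N),
    (f (x - h • ∑ k, q k) + h * ∑ k, ‖q k‖ ^ 2 / 2)

/-- Pointwise Prékopa–Leindler hypothesis for the discrete Hopf–Lax semigroup:
with `a = α/β`, `b = (β-α)/β`, `θ = β(β-α)/(α n h)`, `u(x) = e^{β Q_n f(x)}`,
`v(y) = e^{-θ|y|²/2}`, `w(z) = e^{α f(β z/α)}`, one has `u(x)^a v(y)^b ≤ w(ax + by)`. -/
theorem pointwise_PL_hypothesis {N : ℕ} (h : ℝ) (hh : 0 < h)
    (f : EuclideanSpace ℝ (Fin N) → ℝ)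
    (α β : ℝ) (hα : 0 < α) (hαβ : α ≤ β) (n : ℕ) (hn : 1 ≤ n)
    (hbd : ∀ x : EuclideanSpace ℝ (Fin N),
      BddBelow (Set.range fun q : Fin n → EuclideanSpace ℝ (Fin N) =>
        f (x - h • ∑ k, q k) + h * ∑ k, ‖q k‖ ^ 2 / 2)) :
    ∀ x y : EuclideanSpace ℝ (Fin N),
      Real.exp (β * Q h f n x) ^ (α / β) *
        Real.exp (-(β * (β - α) / (α * ((n : ℝ) * h))) * ‖y‖ ^ 2 / 2) ^ ((β - α) / β)
      ≤ Real.exp (α * f ((β / α) • ((α / β) • x + ((β - α) / β) • y))) := by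
  intro x y
  have hβ : 0 < β := lt_of_lt_of_le hα hαβ
  have hn' : 0 < (n : ℝ) := by exact_mod_cast Nat.lt_of_lt_of_le Nat.zero_lt_one hn
  set c : ℝ := (β - α) / (α * ((n : ℝ) * h)) with hc
  have hQle : Q h f n x ≤
      f (x - h • ∑ _k : Fin n, (-c) • y) + h * ∑ _k : Fin n, ‖(-c) • y‖ ^ 2 / 2 :=
    ciInf_le (hbd x) (fun _ => (-c) • y)
  have hsum1 : x - h • ∑ _k : Fin n, (-c) • y = x + ((n : ℝ) * h * c) • y := by
    rw [Finset.sum_const, Finset.card_univ, Fintype.card_fin,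
      ← Nat.cast_smul_eq_nsmul ℝ, smul_smul, smul_smul, sub_eq_add_neg, ← neg_smul]
    congr 1
    ring
  have hsum2 : h * ∑ _k : Fin n, ‖(-c) • y‖ ^ 2 / 2
      = h * (n : ℝ) * (c ^ 2 * ‖y‖ ^ 2) / 2 := by
    rw [Finset.sum_const]
    simp [norm_smul, mul_pow, abs_mul_abs_self]
    ring_nf
  have harg : (β / α) • ((α / β) • x + ((β - α) / β) • y) = x + ((n : ℝ) * h * c) • y := by
    have h1 : (n : ℝ) * h * c = (β - α) / α := by
      rw [hc]
      field_simp
    rw [h1, smul_add, smul_smul, smul_smul]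
    congr 1
    · rw [div_mul_div_comm]
      rw [mul_comm β α, div_self (by positivity)]
      exact one_smul ℝ x
    · congr 1
      field_simp
  rw [hsum1, hsum2] at hQle
  rw [← harg] at hQle
  set z := (β / α) • ((α / β) • x + ((β - α) / β) • y)
  rw [← Real.exp_mul, ← Real.exp_mul, ← Real.exp_add, Real.exp_le_exp]
  have hc2 : h * (n : ℝ) * (c ^ 2 * ‖y‖ ^ 2) / 2 = (β - α) ^ 2 / (α ^ 2 * ((n : ℝ) * h)) * ‖y‖ ^ 2 / 2 := by
    rw [hc]
    field_simp
  rw [hc2] at hQle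
  have key : α * Q h f n x ≤ α * f z + (β - α) ^ 2 / (α * ((n : ℝ) * h)) * ‖y‖ ^ 2 / 2 := by
    have := mul_le_mul_of_nonneg_left hQle (le_of_lt hα)
    calc α * Q h f n x ≤ α * (f z + (β - α) ^ 2 / (α ^ 2 * ((n : ℝ) * h)) * ‖y‖ ^ 2 / 2) := this
      _ = α * f z + (β - α) ^ 2 / (α * ((n : ℝ) * h)) * ‖y‖ ^ 2 / 2 := by
          field_simp
  have e1 : β * Q h f n x * (α / β) = α * Q h f n x := by field_simp
  have e2 : -(β * (β - α) / (α * ((n : ℝ) * h))) * ‖y‖ ^ 2 / 2 * ((β - α) / β)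
      = -((β - α) ^ 2 / (α * ((n : ℝ) * h)) * ‖y‖ ^ 2 / 2) := by
    field_simp
  rw [e1, e2]
  linarith
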